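/- Let S, T be independent Uniform(0,1) random variables, δ > 2, and suppose ρ : ℝ_{≥0} → [0,1] satisfies ρ(r) ≤ 1 for r < 1 and ρ(r) ≤ r^{-δ} for r ≥ 1. Then there exists a constant C such that for all x, y ∈ ℝ² with ‖x−y‖ ≥ 1, E[ρ(min(S,T)^{1/2} · ‖x−y‖²)] ≤ C·‖x−y‖^{-4}. -/

import Mathlib

open MeasureTheory

/-- Min-kernel bound with `γ = 1/2`, `δ > 2`: for `S, T` independent `Uniform(0,1)` and a
profile `ρ` with `ρ(r) ≤ 1` for `r < 1` and `ρ(r) ≤ r^{-δ}` for `r ≥ 1`, one has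
`E[ρ(min(S,T)^{1/2} ‖x−y‖²)] ≤ C ‖x−y‖^{-4}` whenever `‖x−y‖ ≥ 1`. -/
theorem stmt_9 {Ω : Type*} [MeasurableSpace Ω] (μ : Measure Ω) [IsProbabilityMeasure μ]
    (δ : ℝ) (hδ : 2 < δ)
    (S T : Ω → ℝ) (hSmeas : Measurable S) (hTmeas : Measurable T)
    (hindep : ProbabilityTheory.IndepFun S T μ)
    (hS : μ.map S = volume.restrict (Set.Ioo (0 : ℝ) 1))
    (hT : μ.map T = volume.restrict (Set.Ioo (0 : ℝ) 1))
    (ρ : ℝ → ℝ) (hρmeas : Measurable ρ)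
    (hρ0 : ∀ r, 0 ≤ ρ r) (hρ1 : ∀ r : ℝ, r < 1 → ρ r ≤ 1)
    (hρδ : ∀ r : ℝ, 1 ≤ r → ρ r ≤ r ^ (-δ)) :
    ∃ C : ℝ, ∀ x y : EuclideanSpace ℝ (Fin 2), 1 ≤ ‖x - y‖ →
      ∫ ω, ρ (min (S ω) (T ω) ^ (1 / 2 : ℝ) * ‖x - y‖ ^ 2) ∂μ
        ≤ C * ‖x - y‖ ^ (-4 : ℝ) := by
  classical
  have hd : 0 < δ / 2 - 1 := by linarith
  set k : ℝ := (δ / 2 - 1)⁻¹ with hk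
  have hk0 : 0 < k := inv_pos.2 hd
  refine ⟨2 * (1 + k), ?_⟩
  intro x y hxy
  set a : ℝ := ‖x - y‖ with ha
  have ha0 : 0 < a := lt_of_lt_of_le one_pos hxy
  set ε : ℝ := a ^ (-4 : ℝ) with hε
  have hε0 : 0 < ε := Real.rpow_pos_of_pos ha0 _
  have hε1 : ε ≤ 1 := Real.rpow_le_one_of_one_le_of_nonpos hxy (by norm_num)
  set C₂ : ℝ := a ^ (-(2 * δ)) with hC2
  have hC20 : 0 < C₂ := Real.rpow_pos_of_pos ha0 _
  set h : ℝ → ℝ := fun u => if u < ε then 1 else C₂ * u ^ (-(δ / 2)) with hh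
  have hhnn : ∀ u, 0 ≤ h u := by
    intro u
    simp only [hh]
    split_ifs with hu
    · norm_num
    · exact mul_nonneg hC20.le (Real.rpow_nonneg (le_trans hε0.le (not_lt.1 hu)) _)
  have hhmeas : Measurable h := by
    apply Measurable.ite (measurableSet_lt measurable_id measurable_const) measurable_const
    fun_prop
  -- global bound for h
  have hB : ∀ u, ‖h u‖ ≤ max 1 (C₂ * ε ^ (-(δ / 2))) := by
    intro u
    rw [Real.norm_eq_abs, abs_of_nonneg (hhnn u)]
    simp only [hh]
    split_ifs with hu
    · exact le_max_left _ _
    · refine le_trans ?_ (le_max_right _ _)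
      exact mul_le_mul_of_nonneg_left
        (Real.rpow_le_rpow_of_nonpos hε0 (not_lt.1 hu) (by linarith)) hC20.le
  have hInt1 : Integrable h (volume.restrict (Set.Ioo (0 : ℝ) 1)) :=
    (integrable_const _).mono' hhmeas.aestronglyMeasurable (ae_of_all _ hB)
  have hIntS : Integrable (fun ω => h (S ω)) μ :=
    (integrable_map_measure hhmeas.aestronglyMeasurable hSmeas.aemeasurable).mp (hS ▸ hInt1)
  have hIntT : Integrable (fun ω => h (T ω)) μ :=
    (integrable_map_measure hhmeas.aestronglyMeasurable hTmeas.aemeasurable).mp (hT ▸ hInt1)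
  -- a.e. the variables lie in (0,1)
  have haeS : ∀ᵐ ω ∂μ, S ω ∈ Set.Ioo (0 : ℝ) 1 := by
    have h0 : ∀ᵐ u ∂(μ.map S), u ∈ Set.Ioo (0 : ℝ) 1 := by
      rw [hS]
      exact ae_restrict_mem measurableSet_Ioo
    exact (ae_map_iff hSmeas.aemeasurable measurableSet_Ioo).1 h0
  have haeT : ∀ᵐ ω ∂μ, T ω ∈ Set.Ioo (0 : ℝ) 1 := by
    have h0 : ∀ᵐ u ∂(μ.map T), u ∈ Set.Ioo (0 : ℝ) 1 := by
      rw [hT]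
      exact ae_restrict_mem measurableSet_Ioo
    exact (ae_map_iff hTmeas.aemeasurable measurableSet_Ioo).1 h0
  have ha2 : (a ^ 2 : ℝ) = a ^ (2 : ℝ) := by
    rw [← Real.rpow_natCast a 2]
    norm_num
  -- pointwise bound
  have hpt : ∀ᵐ ω ∂μ, ρ (min (S ω) (T ω) ^ (1 / 2 : ℝ) * a ^ 2) ≤ h (S ω) + h (T ω) := by
    filter_upwards [haeS, haeT] with ω hs ht
    set s := S ω with hsdef
    set t := T ω with htdef
    have hm0 : 0 < min s t := lt_min hs.1 ht.1
    by_cases hcase : min s t < ε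
    · have harg : min s t ^ (1 / 2 : ℝ) * a ^ 2 < 1 := by
        have h1 : min s t ^ (1 / 2 : ℝ) < ε ^ (1 / 2 : ℝ) :=
          Real.rpow_lt_rpow hm0.le hcase (by norm_num)
        have h2 : ε ^ (1 / 2 : ℝ) = a ^ (-2 : ℝ) := by
          rw [hε, ← Real.rpow_mul ha0.le]
          norm_num
        have h3 : a ^ (-2 : ℝ) * a ^ (2 : ℝ) = 1 := by
          rw [← Real.rpow_add ha0]
          norm_num
        calc min s t ^ (1 / 2 : ℝ) * a ^ 2 < ε ^ (1 / 2 : ℝ) * a ^ 2 :=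
              mul_lt_mul_of_pos_right h1 (by positivity)
          _ = 1 := by rw [h2, ha2, h3]
      have h4 : ρ (min s t ^ (1 / 2 : ℝ) * a ^ 2) ≤ 1 := hρ1 _ harg
      have h5 : (1 : ℝ) ≤ h s + h t := by
        rcases min_lt_iff.1 hcase with hlt | hlt
        · have hse : h s = 1 := if_pos hlt
          have := hhnn t
          linarith
        · have hte : h t = 1 := if_pos hlt
          have := hhnn s
          linarith
      linarith
    · have hεm : ε ≤ min s t := not_lt.1 hcase
      have harg1 : 1 ≤ min s t ^ (1 / 2 : ℝ) * a ^ 2 := by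
        have h1 : ε ^ (1 / 2 : ℝ) ≤ min s t ^ (1 / 2 : ℝ) :=
          Real.rpow_le_rpow hε0.le hεm (by norm_num)
        have h2 : ε ^ (1 / 2 : ℝ) = a ^ (-2 : ℝ) := by
          rw [hε, ← Real.rpow_mul ha0.le]
          norm_num
        have h3 : a ^ (-2 : ℝ) * a ^ (2 : ℝ) = 1 := by
          rw [← Real.rpow_add ha0]
          norm_num
        calc (1 : ℝ) = ε ^ (1 / 2 : ℝ) * a ^ 2 := by rw [h2, ha2, h3]
          _ ≤ min s t ^ (1 / 2 : ℝ) * a ^ 2 := mul_le_mul_of_nonneg_right h1 (by positivity)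
      have h4 := hρδ _ harg1
      have h6 : (min s t ^ (1 / 2 : ℝ) * a ^ 2) ^ (-δ) = C₂ * min s t ^ (-(δ / 2)) := by
        rw [ha2, Real.mul_rpow (Real.rpow_nonneg hm0.le _) (Real.rpow_nonneg ha0.le _),
          ← Real.rpow_mul hm0.le, ← Real.rpow_mul ha0.le, hC2]
        ring_nf
      have h7 : C₂ * min s t ^ (-(δ / 2)) ≤ h s + h t := by
        rcases min_cases s t with ⟨heq, _⟩ | ⟨heq, _⟩
        · rw [heq]
          have hs' : ¬ s < ε := not_lt.2 (heq ▸ hεm)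
          have hse : h s = C₂ * s ^ (-(δ / 2)) := if_neg hs'
          have := hhnn t
          linarith
        · rw [heq]
          have ht' : ¬ t < ε := not_lt.2 (heq ▸ hεm)
          have hte : h t = C₂ * t ^ (-(δ / 2)) := if_neg ht'
          have := hhnn s
          linarith
      calc ρ (min s t ^ (1 / 2 : ℝ) * a ^ 2) ≤ (min s t ^ (1 / 2 : ℝ) * a ^ 2) ^ (-δ) := h4
        _ = C₂ * min s t ^ (-(δ / 2)) := h6
        _ ≤ h s + h t := h7
  -- the one-dimensional integral
  have hIone : ∫ u in Set.Ioo (0 : ℝ) 1, h u ≤ (1 + k) * ε := by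
    have hsplit : Set.Ioo (0 : ℝ) 1 = Set.Ioo 0 ε ∪ Set.Ico ε 1 :=
      (Set.Ioo_union_Ico_eq_Ioo hε0 hε1).symm
    have hsub1 : Set.Ioo (0 : ℝ) ε ⊆ Set.Ioo 0 1 := Set.Ioo_subset_Ioo_right hε1
    have hsub2 : Set.Ico ε 1 ⊆ Set.Ioo (0 : ℝ) 1 := fun u hu =>
      ⟨lt_of_lt_of_le hε0 hu.1, hu.2⟩
    have hI1 : IntegrableOn h (Set.Ioo (0 : ℝ) ε) := IntegrableOn.mono_set hInt1 hsub1
    have hI2 : IntegrableOn h (Set.Ico ε 1) := IntegrableOn.mono_set hInt1 hsub2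
    have hdisj : Disjoint (Set.Ioo (0 : ℝ) ε) (Set.Ico ε 1) :=
      Set.disjoint_left.2 fun u hu hu' => absurd hu.2 (not_lt.2 hu'.1)
    have e1 : ∫ u in Set.Ioo (0 : ℝ) ε, h u = ε := by
      rw [setIntegral_congr_fun measurableSet_Ioo
        (fun u (hu : u ∈ Set.Ioo (0:ℝ) ε) => if_pos hu.2 : Set.EqOn h (fun _ => (1:ℝ)) _)]
      simp [Real.volume_Ioo, ENNReal.toReal_ofReal hε0.le, hε0.le]
    have e2 : ∫ u in Set.Ico ε 1, h u
        = C₂ * ((1 - ε ^ (-(δ / 2) + 1)) / (-(δ / 2) + 1)) := by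
      rw [setIntegral_congr_fun measurableSet_Ico
        (fun u (hu : u ∈ Set.Ico ε 1) => if_neg (not_lt.2 hu.1) :
          Set.EqOn h (fun u => C₂ * u ^ (-(δ / 2))) _)]
      rw [MeasureTheory.integral_const_mul]
      congr 1
      rw [setIntegral_congr_set Ico_ae_eq_Ioc, ← intervalIntegral.integral_of_le hε1]
      rw [integral_rpow (Or.inr ⟨ne_of_lt (by linarith), by
        rw [Set.uIcc_of_le hε1]
        intro hmem
        exact absurd hmem.1 (not_le.2 hε0)⟩)]
      rw [Real.one_rpow]
    have hkey : C₂ * ε ^ (-(δ / 2) + 1) = ε := by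
      rw [hC2, hε, ← Real.rpow_mul ha0.le, ← Real.rpow_add ha0]
      congr 1
      ring
    have hc : -(δ / 2) + 1 < 0 := by linarith
    have e3 : C₂ * ((1 - ε ^ (-(δ / 2) + 1)) / (-(δ / 2) + 1))
        = (C₂ - ε) / (-(δ / 2) + 1) := by
      rw [← mul_div_assoc, mul_sub, mul_one, hkey]
    have hkinv : k * (δ / 2 - 1) = 1 := inv_mul_cancel₀ (ne_of_gt hd)
    have h10 : k * ε * (-(δ / 2) + 1) = -ε := by
      linear_combination (-ε) * hkinv
    have h9 : (C₂ - ε) / (-(δ / 2) + 1) ≤ k * ε := by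
      rw [div_le_iff_of_neg hc, h10]
      linarith [hC20]
    have hfin : (1 + k) * ε = ε + k * ε := by ring
    rw [hsplit, setIntegral_union hdisj measurableSet_Ico hI1 hI2, e1, e2, e3, hfin]
    linarith [h9]
  -- put things together
  calc ∫ ω, ρ (min (S ω) (T ω) ^ (1 / 2 : ℝ) * a ^ 2) ∂μ
      ≤ ∫ ω, (h (S ω) + h (T ω)) ∂μ :=
        integral_mono_of_nonneg (ae_of_all _ fun ω => hρ0 _) (hIntS.add hIntT) hpt
    _ = (∫ ω, h (S ω) ∂μ) + ∫ ω, h (T ω) ∂μ := integral_add hIntS hIntT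
    _ = 2 * ∫ u in Set.Ioo (0 : ℝ) 1, h u := by
        rw [← integral_map hSmeas.aemeasurable hhmeas.aestronglyMeasurable,
          ← integral_map hTmeas.aemeasurable hhmeas.aestronglyMeasurable, hS, hT]
        ring
    _ ≤ 2 * ((1 + k) * ε) := by
        apply mul_le_mul_of_nonneg_left hIone (by norm_num)
    _ = 2 * (1 + k) * a ^ (-4 : ℝ) := by rw [hε]; ring
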